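/- Assume both the buyer distribution and the seller distribution are regular. Then for every bilateral trading mechanism M = (x, p^B, p^S) that is IR, BIC and ex-ante WBB, GFT(M) ≤ Σ_{b,s} f(b)·g(s)·(b − s)·𝟙[φ(b) > s] + Σ_{b,s} f(b)·g(s)·(b − s)·𝟙[b > τ(s)]; that is, the sum of the gains from trade of the Seller-Offering Mechanism and of the Buyer-Offering Mechanism is at least GFT(M). -/

import Mathlib

open Finset

/-- Buyer's Myerson virtual value:
`φ(β_r) = β_r − (β_{r+1} − β_r)·(Σ_{l>r} f(β_l))/f(β_r)` for `r < K-1`, `φ(β_{K-1}) = β_{K-1}`. -/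
noncomputable def buyerVirtual (K : ℕ) (β f : Fin K → ℝ) (r : Fin K) : ℝ :=
  β r - ((if h : (r : ℕ) + 1 < K then β ⟨(r : ℕ) + 1, h⟩ else β r) - β r)
      * (∑ l ∈ Finset.Ioi r, f l) / f r

/-- Seller's Myerson virtual value:
`τ(α_1) = α_1`, `τ(α_r) = α_r + (α_r − α_{r−1})·(Σ_{l<r} g(α_l))/g(α_r)` for `r > 1`. -/
noncomputable def sellerVirtual (K' : ℕ) (α g : Fin K' → ℝ) (r : Fin K') : ℝ :=
  α r + (α r - (if 0 < (r : ℕ) then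
        α ⟨(r : ℕ) - 1, Nat.lt_of_le_of_lt (Nat.sub_le _ _) r.isLt⟩ else α r))
      * (∑ l ∈ Finset.Iio r, g l) / g r

/- ## Auxiliary definitions and lemmas -/

/-- Buyer spacing `β_{r+1} − β_r` (zero at the top type). -/
noncomputable def dB (K : ℕ) (β : Fin K → ℝ) (l : Fin K) : ℝ :=
  (if h : (l : ℕ) + 1 < K then β ⟨(l : ℕ) + 1, h⟩ else β l) - β l

/-- Seller spacing `α_r − α_{r−1}` (zero at the bottom type). -/
noncomputable def dS (K' : ℕ) (α : Fin K' → ℝ) (l : Fin K') : ℝ :=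
  α l - (if 0 < (l : ℕ) then
      α ⟨(l : ℕ) - 1, Nat.lt_of_le_of_lt (Nat.sub_le _ _) l.isLt⟩ else α l)

lemma dB_nonneg {K : ℕ} {β : Fin K → ℝ} (hβ : Monotone β) (l : Fin K) :
    0 ≤ dB K β l := by
  unfold dB
  split_ifs with h
  · have : l ≤ (⟨(l : ℕ) + 1, h⟩ : Fin K) := by
      simp [Fin.le_def]
    linarith [hβ this]
  · simp

lemma dS_nonneg {K' : ℕ} {α : Fin K' → ℝ} (hα : Monotone α) (l : Fin K') :
    0 ≤ dS K' α l := by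
  unfold dS
  split_ifs with h
  · have : (⟨(l : ℕ) - 1, Nat.lt_of_le_of_lt (Nat.sub_le _ _) l.isLt⟩ : Fin K') ≤ l := by
      simp [Fin.le_def]
    linarith [hα this]
  · simp

lemma fmul_buyerVirtual {K : ℕ} (β f : Fin K → ℝ) (hf : ∀ r, 0 < f r) (r : Fin K) :
    f r * buyerVirtual K β f r = f r * β r - dB K β r * ∑ l ∈ Finset.Ioi r, f l := by
  unfold buyerVirtual dB
  have hne : f r ≠ 0 := (hf r).ne'
  field_simp

lemma gmul_sellerVirtual {K' : ℕ} (α g : Fin K' → ℝ) (hg : ∀ r, 0 < g r) (r : Fin K') :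
    g r * sellerVirtual K' α g r = g r * α r + dS K' α r * ∑ l ∈ Finset.Iio r, g l := by
  unfold sellerVirtual dS
  have hne : g r ≠ 0 := (hg r).ne'
  field_simp

lemma buyerVirtual_le {K : ℕ} (β f : Fin K → ℝ) (hβ : Monotone β) (hf : ∀ r, 0 < f r)
    (r : Fin K) : buyerVirtual K β f r ≤ β r := by
  have h1 : buyerVirtual K β f r = β r - dB K β r * (∑ l ∈ Finset.Ioi r, f l) / f r := rfl
  rw [h1]
  have : 0 ≤ dB K β r * (∑ l ∈ Finset.Ioi r, f l) / f r :=
    div_nonneg (mul_nonneg (dB_nonneg hβ r)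
      (Finset.sum_nonneg fun l _ => (hf l).le)) (hf r).le
  linarith

lemma le_sellerVirtual {K' : ℕ} (α g : Fin K' → ℝ) (hα : Monotone α) (hg : ∀ r, 0 < g r)
    (r : Fin K') : α r ≤ sellerVirtual K' α g r := by
  have h1 : sellerVirtual K' α g r = α r + dS K' α r * (∑ l ∈ Finset.Iio r, g l) / g r := rfl
  rw [h1]
  have : 0 ≤ dS K' α r * (∑ l ∈ Finset.Iio r, g l) / g r :=
    div_nonneg (mul_nonneg (dS_nonneg hα r)
      (Finset.sum_nonneg fun l _ => (hg l).le)) (hg r).le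
  linarith

lemma myIio_succ {K n : ℕ} (h : n + 1 < K) :
    (Finset.Iio (⟨n+1, h⟩ : Fin K)) =
      insert ⟨n, Nat.lt_of_succ_lt h⟩ (Finset.Iio ⟨n, Nat.lt_of_succ_lt h⟩) := by
  ext a
  simp only [Finset.mem_Iio, Finset.mem_insert, Fin.lt_def, Fin.ext_iff]
  show a.1 < n + 1 ↔ a.1 = n ∨ a.1 < n
  omega

lemma key_Iio {K : ℕ} (u c : Fin K → ℝ) (h0 : ∀ r, 0 ≤ u r)
    (hstep : ∀ n (h : n + 1 < K),
      u ⟨n, Nat.lt_of_succ_lt h⟩ + c ⟨n, Nat.lt_of_succ_lt h⟩ ≤ u ⟨n+1, h⟩) :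
    ∀ r : Fin K, ∑ l ∈ Finset.Iio r, c l ≤ u r := by
  have H : ∀ m, ∀ r : Fin K, r.1 = m → ∑ l ∈ Finset.Iio r, c l ≤ u r := by
    intro m
    induction m with
    | zero =>
      intro r hr
      have he : Finset.Iio r = ∅ := by
        ext a
        simp only [Finset.mem_Iio, Finset.notMem_empty, iff_false, Fin.lt_def, hr]
        omega
      rw [he, Finset.sum_empty]; exact h0 r
    | succ n ih =>
      intro r hr
      have h : n + 1 < K := hr ▸ r.isLt
      have hre : r = ⟨n+1, h⟩ := Fin.ext hr
      subst hre
      rw [myIio_succ h, Finset.sum_insert (by simp)]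
      have h1 := ih ⟨n, Nat.lt_of_succ_lt h⟩ rfl
      have h2 := hstep n h
      linarith
  intro r; exact H r.1 r rfl

lemma key_Ioi {K : ℕ} (w c : Fin K → ℝ) (h0 : ∀ r, 0 ≤ w r)
    (hstep : ∀ n (h : n + 1 < K),
      w ⟨n+1, h⟩ + c ⟨n+1, h⟩ ≤ w ⟨n, Nat.lt_of_succ_lt h⟩) :
    ∀ r : Fin K, ∑ l ∈ Finset.Ioi r, c l ≤ w r := by
  have H : ∀ m, ∀ r : Fin K, r.1 + m + 1 = K → ∑ l ∈ Finset.Ioi r, c l ≤ w r := by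
    intro m
    induction m with
    | zero =>
      intro r hr
      have he : Finset.Ioi r = ∅ := by
        ext a
        simp only [Finset.mem_Ioi, Finset.notMem_empty, iff_false, Fin.lt_def]
        have := a.isLt; omega
      rw [he, Finset.sum_empty]; exact h0 r
    | succ n ih =>
      intro r hr
      have h : r.1 + 1 < K := by omega
      have hins : Finset.Ioi r = insert ⟨r.1+1, h⟩ (Finset.Ioi (⟨r.1+1, h⟩ : Fin K)) := by
        ext a
        simp only [Finset.mem_Ioi, Finset.mem_insert, Fin.lt_def, Fin.ext_iff]
        show r.1 < a.1 ↔ a.1 = r.1 + 1 ∨ r.1 + 1 < a.1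
        omega
      rw [hins, Finset.sum_insert (by simp)]
      have h1 := ih ⟨r.1+1, h⟩ (by show r.1 + 1 + n + 1 = K; omega)
      have h2 := hstep r.1 h
      have h2' : w ⟨r.1+1, h⟩ + c ⟨r.1+1, h⟩ ≤ w r := by
        have he : (⟨r.1, Nat.lt_of_succ_lt h⟩ : Fin K) = r := Fin.ext rfl
        rwa [he] at h2
      linarith
  intro r
  exact H (K - r.1 - 1) r (by have := r.isLt; omega)

lemma sum_Iio_swap {K : ℕ} (F : Fin K → Fin K → ℝ) :
    ∑ r, ∑ l ∈ Finset.Iio r, F l r = ∑ l, ∑ r ∈ Finset.Ioi l, F l r := by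
  have h1 : ∀ r : Fin K, ∑ l ∈ Finset.Iio r, F l r = ∑ l, if l < r then F l r else 0 := by
    intro r
    rw [← Finset.sum_filter]
    congr 1
    ext a; simp
  have h2 : ∀ l : Fin K, ∑ r ∈ Finset.Ioi l, F l r = ∑ r, if l < r then F l r else 0 := by
    intro l
    rw [← Finset.sum_filter]
    congr 1
    ext a; simp
  simp_rw [h1, h2]
  exact Finset.sum_comm

/-- Myerson payment bound for the buyer: expected payment is at most expected virtual surplus. -/
lemma buyer_payment_bound {K K' : ℕ} (β f : Fin K → ℝ) (g : Fin K' → ℝ)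
    (hf : ∀ r, 0 < f r)
    (x pB : Fin K → Fin K' → ℝ)
    (hBICb : ∀ b b' : Fin K,
      ∑ s, g s * (β b * x b' s - pB b' s) ≤ ∑ s, g s * (β b * x b s - pB b s))
    (hIRb : ∀ b : Fin K, 0 ≤ ∑ s, g s * (β b * x b s - pB b s)) :
    ∑ b, f b * (∑ s, g s * pB b s)
      ≤ ∑ b, f b * buyerVirtual K β f b * (∑ s, g s * x b s) := by
  set X : Fin K → ℝ := fun b => ∑ s, g s * x b s with hX
  set u : Fin K → ℝ := fun b => ∑ s, g s * (β b * x b s - pB b s) with hu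
  have hu' : ∀ b, u b = β b * X b - ∑ s, g s * pB b s := by
    intro b
    simp only [hu, hX]
    rw [Finset.mul_sum, ← Finset.sum_sub_distrib]
    exact Finset.sum_congr rfl fun s _ => by ring
  have hchain : ∀ r : Fin K, ∑ l ∈ Finset.Iio r, dB K β l * X l ≤ u r := by
    apply key_Iio _ _ hIRb
    intro n h
    have hb := hBICb ⟨n+1, h⟩ ⟨n, Nat.lt_of_succ_lt h⟩
    have hl : ∑ s, g s * (β ⟨n+1, h⟩ * x ⟨n, Nat.lt_of_succ_lt h⟩ s
          - pB ⟨n, Nat.lt_of_succ_lt h⟩ s)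
        = u ⟨n, Nat.lt_of_succ_lt h⟩
          + (β ⟨n+1, h⟩ - β ⟨n, Nat.lt_of_succ_lt h⟩) * X ⟨n, Nat.lt_of_succ_lt h⟩ := by
      simp only [hu, hX]
      rw [Finset.mul_sum, ← Finset.sum_add_distrib]
      exact Finset.sum_congr rfl fun s _ => by ring
    have hd : dB K β ⟨n, Nat.lt_of_succ_lt h⟩
        = β ⟨n+1, h⟩ - β ⟨n, Nat.lt_of_succ_lt h⟩ := by
      unfold dB
      rw [dif_pos]
    rw [hl] at hb
    rw [hd]
    linarith
  have hsum : ∑ b, f b * (∑ l ∈ Finset.Iio b, dB K β l * X l) ≤ ∑ b, f b * u b :=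
    Finset.sum_le_sum fun b _ => mul_le_mul_of_nonneg_left (hchain b) (hf b).le
  have hswap : ∑ b, f b * (∑ l ∈ Finset.Iio b, dB K β l * X l)
      = ∑ l, dB K β l * X l * (∑ r ∈ Finset.Ioi l, f r) := by
    calc ∑ b, f b * (∑ l ∈ Finset.Iio b, dB K β l * X l)
        = ∑ b, ∑ l ∈ Finset.Iio b, f b * (dB K β l * X l) := by
          exact Finset.sum_congr rfl fun b _ => Finset.mul_sum _ _ _
      _ = ∑ l, ∑ r ∈ Finset.Ioi l, f r * (dB K β l * X l) :=
          sum_Iio_swap (fun l r => f r * (dB K β l * X l))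
      _ = ∑ l, dB K β l * X l * (∑ r ∈ Finset.Ioi l, f r) := by
          refine Finset.sum_congr rfl fun l _ => ?_
          rw [← Finset.sum_mul, mul_comm]
  calc ∑ b, f b * (∑ s, g s * pB b s)
      = ∑ b, (f b * β b * X b - f b * u b) := by
        refine Finset.sum_congr rfl fun b _ => ?_
        rw [hu' b]; ring
    _ = ∑ b, f b * β b * X b - ∑ b, f b * u b := Finset.sum_sub_distrib _ _
    _ ≤ ∑ b, f b * β b * X b - ∑ l, dB K β l * X l * (∑ r ∈ Finset.Ioi l, f r) := by
        rw [← hswap]; linarith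
    _ = ∑ b, f b * buyerVirtual K β f b * X b := by
        rw [← Finset.sum_sub_distrib]
        refine Finset.sum_congr rfl fun b _ => ?_
        have hh := fmul_buyerVirtual β f hf b
        calc f b * β b * X b - dB K β b * X b * (∑ r ∈ Finset.Ioi b, f r)
            = (f b * β b - dB K β b * (∑ r ∈ Finset.Ioi b, f r)) * X b := by ring
          _ = (f b * buyerVirtual K β f b) * X b := by rw [← hh]
          _ = f b * buyerVirtual K β f b * X b := by ring

/-- Myerson payment bound for the seller: expected payment is at least expected virtual cost. -/
lemma seller_payment_bound {K K' : ℕ} (α g : Fin K' → ℝ) (f : Fin K → ℝ)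
    (hg : ∀ r, 0 < g r)
    (x pS : Fin K → Fin K' → ℝ)
    (hBICs : ∀ s s' : Fin K',
      ∑ b, f b * (pS b s' - α s * x b s') ≤ ∑ b, f b * (pS b s - α s * x b s))
    (hIRs : ∀ s : Fin K', 0 ≤ ∑ b, f b * (pS b s - α s * x b s)) :
    ∑ s, g s * sellerVirtual K' α g s * (∑ b, f b * x b s)
      ≤ ∑ s, g s * (∑ b, f b * pS b s) := by
  set V : Fin K' → ℝ := fun s => ∑ b, f b * x b s with hV
  set w : Fin K' → ℝ := fun s => ∑ b, f b * (pS b s - α s * x b s) with hw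
  have hw' : ∀ s, w s = (∑ b, f b * pS b s) - α s * V s := by
    intro s
    simp only [hw, hV]
    rw [Finset.mul_sum, ← Finset.sum_sub_distrib]
    exact Finset.sum_congr rfl fun b _ => by ring
  have hchain : ∀ r : Fin K', ∑ l ∈ Finset.Ioi r, dS K' α l * V l ≤ w r := by
    apply key_Ioi _ _ hIRs
    intro n h
    have hb := hBICs ⟨n, Nat.lt_of_succ_lt h⟩ ⟨n+1, h⟩
    have hl : ∑ b, f b * (pS b ⟨n+1, h⟩ - α ⟨n, Nat.lt_of_succ_lt h⟩ * x b ⟨n+1, h⟩)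
        = w ⟨n+1, h⟩ + (α ⟨n+1, h⟩ - α ⟨n, Nat.lt_of_succ_lt h⟩) * V ⟨n+1, h⟩ := by
      simp only [hw, hV]
      rw [Finset.mul_sum, ← Finset.sum_add_distrib]
      exact Finset.sum_congr rfl fun b _ => by ring
    have hd : dS K' α ⟨n+1, h⟩ = α ⟨n+1, h⟩ - α ⟨n, Nat.lt_of_succ_lt h⟩ := by
      unfold dS
      rw [if_pos (Nat.succ_pos n)]
      congr 1
    rw [hl] at hb
    rw [hd]
    linarith
  have hsum : ∑ s, g s * (∑ l ∈ Finset.Ioi s, dS K' α l * V l) ≤ ∑ s, g s * w s :=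
    Finset.sum_le_sum fun s _ => mul_le_mul_of_nonneg_left (hchain s) (hg s).le
  have hswap : ∑ s, g s * (∑ l ∈ Finset.Ioi s, dS K' α l * V l)
      = ∑ l, dS K' α l * V l * (∑ r ∈ Finset.Iio l, g r) := by
    calc ∑ s, g s * (∑ l ∈ Finset.Ioi s, dS K' α l * V l)
        = ∑ s, ∑ l ∈ Finset.Ioi s, g s * (dS K' α l * V l) := by
          exact Finset.sum_congr rfl fun s _ => Finset.mul_sum _ _ _
      _ = ∑ l, ∑ r ∈ Finset.Iio l, g r * (dS K' α l * V l) :=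
          (sum_Iio_swap (fun a b => g a * (dS K' α b * V b))).symm
      _ = ∑ l, dS K' α l * V l * (∑ r ∈ Finset.Iio l, g r) := by
          refine Finset.sum_congr rfl fun l _ => ?_
          rw [← Finset.sum_mul, mul_comm]
  calc ∑ s, g s * sellerVirtual K' α g s * V s
      = ∑ s, (g s * α s * V s + dS K' α s * V s * (∑ r ∈ Finset.Iio s, g r)) := by
        refine Finset.sum_congr rfl fun s _ => ?_
        have hh := gmul_sellerVirtual α g hg s
        calc g s * sellerVirtual K' α g s * V s
            = (g s * α s + dS K' α s * (∑ r ∈ Finset.Iio s, g r)) * V s := by rw [← hh]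
          _ = g s * α s * V s + dS K' α s * V s * (∑ r ∈ Finset.Iio s, g r) := by ring
    _ = ∑ s, g s * α s * V s + ∑ s, dS K' α s * V s * (∑ r ∈ Finset.Iio s, g r) :=
        Finset.sum_add_distrib
    _ ≤ ∑ s, g s * α s * V s + ∑ s, g s * w s := by
        rw [← hswap]; linarith
    _ = ∑ s, g s * (∑ b, f b * pS b s) := by
        rw [← Finset.sum_add_distrib]
        refine Finset.sum_congr rfl fun s _ => ?_
        rw [hw' s]; ring

theorem stmt_7 (K K' : ℕ) (hK : 0 < K) (hK' : 0 < K')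
    (β f : Fin K → ℝ) (hβ : StrictMono β) (hf : ∀ r, 0 < f r) (hf1 : ∑ r, f r = 1)
    (α g : Fin K' → ℝ) (hα : StrictMono α) (hg : ∀ r, 0 < g r) (hg1 : ∑ r, g r = 1)
    (hregB : Monotone (buyerVirtual K β f))
    (hregS : Monotone (sellerVirtual K' α g))
    (x pB pS : Fin K → Fin K' → ℝ)
    (hx01 : ∀ b s, x b s ∈ Set.Icc (0 : ℝ) 1)
    (hBICb : ∀ b b' : Fin K,
      ∑ s, g s * (β b * x b' s - pB b' s) ≤ ∑ s, g s * (β b * x b s - pB b s))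
    (hBICs : ∀ s s' : Fin K',
      ∑ b, f b * (pS b s' - α s * x b s') ≤ ∑ b, f b * (pS b s - α s * x b s))
    (hIRb : ∀ b : Fin K, 0 ≤ ∑ s, g s * (β b * x b s - pB b s))
    (hIRs : ∀ s : Fin K', 0 ≤ ∑ b, f b * (pS b s - α s * x b s))
    (hWBB : 0 ≤ ∑ b, ∑ s, f b * g s * (pB b s - pS b s)) :
    ∑ b, ∑ s, f b * g s * (β b - α s) * x b s
      ≤ (∑ b, ∑ s, f b * g s * (β b - α s) *
            (if α s < buyerVirtual K β f b then 1 else 0))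
        + (∑ b, ∑ s, f b * g s * (β b - α s) *
            (if sellerVirtual K' α g s < β b then 1 else 0)) := by
  -- notation
  set φ : Fin K → ℝ := buyerVirtual K β f with hφdef
  set τ : Fin K' → ℝ := sellerVirtual K' α g with hτdef
  have hφle : ∀ b, φ b ≤ β b := fun b => buyerVirtual_le β f hβ.monotone hf b
  have hτge : ∀ s, α s ≤ τ s := fun s => le_sellerVirtual α g hα.monotone hg s
  -- expected payments
  have h1 : ∑ b, ∑ s, f b * g s * pB b s ≤ ∑ b, ∑ s, f b * g s * φ b * x b s := by
    have hb := buyer_payment_bound β f g hf x pB hBICb hIRb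
    calc ∑ b, ∑ s, f b * g s * pB b s
        = ∑ b, f b * (∑ s, g s * pB b s) := by
          refine Finset.sum_congr rfl fun b _ => ?_
          rw [Finset.mul_sum]
          exact Finset.sum_congr rfl fun s _ => by ring
      _ ≤ ∑ b, f b * φ b * (∑ s, g s * x b s) := hb
      _ = ∑ b, ∑ s, f b * g s * φ b * x b s := by
          refine Finset.sum_congr rfl fun b _ => ?_
          rw [Finset.mul_sum]
          exact Finset.sum_congr rfl fun s _ => by ring
  have h2 : ∑ b, ∑ s, f b * g s * τ s * x b s ≤ ∑ b, ∑ s, f b * g s * pS b s := by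
    have hs := seller_payment_bound α g f hg x pS hBICs hIRs
    calc ∑ b, ∑ s, f b * g s * τ s * x b s
        = ∑ s, ∑ b, f b * g s * τ s * x b s := Finset.sum_comm
      _ = ∑ s, g s * τ s * (∑ b, f b * x b s) := by
          refine Finset.sum_congr rfl fun s _ => ?_
          rw [Finset.mul_sum]
          exact Finset.sum_congr rfl fun b _ => by ring
      _ ≤ ∑ s, g s * (∑ b, f b * pS b s) := hs
      _ = ∑ s, ∑ b, f b * g s * pS b s := by
          refine Finset.sum_congr rfl fun s _ => ?_
          rw [Finset.mul_sum]
          exact Finset.sum_congr rfl fun b _ => by ring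
      _ = ∑ b, ∑ s, f b * g s * pS b s := Finset.sum_comm
  have h3 : ∑ b, ∑ s, f b * g s * pS b s ≤ ∑ b, ∑ s, f b * g s * pB b s := by
    have he : ∑ b, ∑ s, f b * g s * (pB b s - pS b s)
        = ∑ b, ∑ s, f b * g s * pB b s - ∑ b, ∑ s, f b * g s * pS b s := by
      rw [← Finset.sum_sub_distrib]
      refine Finset.sum_congr rfl fun b _ => ?_
      rw [← Finset.sum_sub_distrib]
      exact Finset.sum_congr rfl fun s _ => by ring
    linarith [he ▸ hWBB]
  have h4 : ∑ b, ∑ s, f b * g s * τ s * x b s ≤ ∑ b, ∑ s, f b * g s * φ b * x b s := by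
    linarith
  -- pointwise bounds against the two simple mechanisms
  have hA : ∑ b, ∑ s, f b * g s * (φ b - α s) * x b s
      ≤ ∑ b, ∑ s, f b * g s * (β b - α s) * (if α s < φ b then 1 else 0) := by
    refine Finset.sum_le_sum fun b _ => Finset.sum_le_sum fun s _ => ?_
    obtain ⟨hx0, hx1⟩ := hx01 b s
    have hfg : 0 < f b * g s := mul_pos (hf b) (hg s)
    by_cases h : α s < φ b
    · rw [if_pos h]
      nlinarith [mul_nonneg hfg.le (mul_nonneg (sub_pos.mpr h).le (sub_nonneg.mpr hx1)),
        mul_nonneg hfg.le (sub_nonneg.mpr (hφle b))]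
    · rw [if_neg h]
      nlinarith [mul_nonneg hfg.le (mul_nonneg (sub_nonneg.mpr (not_lt.mp h)) hx0)]
  have hB : ∑ b, ∑ s, f b * g s * (β b - τ s) * x b s
      ≤ ∑ b, ∑ s, f b * g s * (β b - α s) * (if τ s < β b then 1 else 0) := by
    refine Finset.sum_le_sum fun b _ => Finset.sum_le_sum fun s _ => ?_
    obtain ⟨hx0, hx1⟩ := hx01 b s
    have hfg : 0 < f b * g s := mul_pos (hf b) (hg s)
    by_cases h : τ s < β b
    · rw [if_pos h]
      nlinarith [mul_nonneg hfg.le (mul_nonneg (sub_pos.mpr h).le (sub_nonneg.mpr hx1)),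
        mul_nonneg hfg.le (sub_nonneg.mpr (hτge s))]
    · rw [if_neg h]
      nlinarith [mul_nonneg hfg.le (mul_nonneg (sub_nonneg.mpr (not_lt.mp h)) hx0)]
  -- splitting identities
  have hLeq : ∑ b, ∑ s, f b * g s * (β b - α s) * x b s
      = ∑ b, ∑ s, f b * g s * β b * x b s - ∑ b, ∑ s, f b * g s * α s * x b s := by
    rw [← Finset.sum_sub_distrib]
    refine Finset.sum_congr rfl fun b _ => ?_
    rw [← Finset.sum_sub_distrib]
    exact Finset.sum_congr rfl fun s _ => by ring
  have hAeq : ∑ b, ∑ s, f b * g s * (φ b - α s) * x b s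
      = ∑ b, ∑ s, f b * g s * φ b * x b s - ∑ b, ∑ s, f b * g s * α s * x b s := by
    rw [← Finset.sum_sub_distrib]
    refine Finset.sum_congr rfl fun b _ => ?_
    rw [← Finset.sum_sub_distrib]
    exact Finset.sum_congr rfl fun s _ => by ring
  have hBeq : ∑ b, ∑ s, f b * g s * (β b - τ s) * x b s
      = ∑ b, ∑ s, f b * g s * β b * x b s - ∑ b, ∑ s, f b * g s * τ s * x b s := by
    rw [← Finset.sum_sub_distrib]
    refine Finset.sum_congr rfl fun b _ => ?_
    rw [← Finset.sum_sub_distrib]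
    exact Finset.sum_congr rfl fun s _ => by ring
  linarith
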